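/- Let d ≥ 2, n > 0, 0 < m ≤ n/4 and j ∈ ℤ^d. If ρ(K_0^n, K_j^m) ≤ n/2, then A(K_j^m) ⊆ A(K_0^n). -/

import Mathlib

open MeasureTheory
open scoped ENNReal NNReal

noncomputable section

/-- The level-`m` cube `K_i^m` in `ℝ^d`:
`K_i^m = {x : |x^(l) - m·i^(l)| ≤ m/2 for all l}`. -/
def cube (d : ℕ) (m : ℝ) (i : Fin d → ℤ) : Set (EuclideanSpace ℝ (Fin d)) :=
  {x | ∀ l, |x l - m * (i l : ℝ)| ≤ m / 2}

/-- The distance `ρ(A,B) = inf {|x - y| : x ∈ A, y ∈ B}` between two sets. -/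
def rho (d : ℕ) (A B : Set (EuclideanSpace ℝ (Fin d))) : ℝ :=
  sInf (Set.image2 dist A B)

/-- The discrete ball `B_i(r)`: the union of the level-1 cubes `K_j^1` with
`ρ(K_i^1, K_j^1) ≤ r` (and `B_i(0) = ∅`). -/
def dball (d : ℕ) (i : Fin d → ℤ) (r : ℝ) : Set (EuclideanSpace ℝ (Fin d)) :=
  if 0 < r then
    ⋃ j ∈ {j : Fin d → ℤ | rho d (cube d 1 i) (cube d 1 j) ≤ r}, cube d 1 j
  else ∅

/-- `π_d`, the Lebesgue volume of the unit Euclidean ball in `ℝ^d`. -/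
def unitBallVol (d : ℕ) : ℝ :=
  (volume (Metric.ball (0 : EuclideanSpace ℝ (Fin d)) 1)).toReal

/-- `β_d = ⌈3 + 2√d · π_d^(1/d)⌉`. -/
def betaD (d : ℕ) : ℝ :=
  (⌈3 + 2 * Real.sqrt d * (unitBallVol d) ^ ((1 : ℝ) / d)⌉ : ℤ)

/-- The embedding of `ℤ^d` into `ℝ^d`. -/
def embedZ (d : ℕ) (i : Fin d → ℤ) : EuclideanSpace ℝ (Fin d) :=
  WithLp.toLp 2 (fun l => (i l : ℝ))

/-- `A(K_j^m)`: the union of `K_j^m` with its `3^d - 1` neighbouring level-`m`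
cubes, i.e. the cubes `K_i^m` with `‖i - j‖_∞ ≤ 1`. -/
def nbhd (d : ℕ) (m : ℝ) (j : Fin d → ℤ) : Set (EuclideanSpace ℝ (Fin d)) :=
  ⋃ i ∈ {i : Fin d → ℤ | ‖i - j‖ ≤ 1}, cube d m i

/-- The radius `R_i(ζ) = inf {r > 0 : Σ_{j : ρ(K_j^1,K_i^1) ≤ β_d r} ζ(j) ≤ π_d r^d}`
if `ζ i > 0` (with `inf ∅ = +∞`, so the value is taken in `ℝ≥0∞`), and `R_i(ζ) = 0`
if `ζ i = 0`. -/
def Rad (d : ℕ) (ζ : (Fin d → ℤ) → ℕ) (i : Fin d → ℤ) : ℝ≥0∞ :=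
  if ζ i = 0 then 0
  else sInf {t : ℝ≥0∞ | ∃ r : ℝ, 0 < r ∧ t = ENNReal.ofReal r ∧
    ((∑ᶠ j ∈ {j : Fin d → ℤ |
        rho d (cube d 1 j) (cube d 1 i) ≤ betaD d * r}, ζ j : ℕ) : ℝ)
      ≤ unitBallVol d * r ^ d}

/-- The sup norm `‖x‖_∞` on `ℝ^d`. -/
def supNorm (d : ℕ) (x : EuclideanSpace ℝ (Fin d)) : ℝ := ⨆ l, |x l|

lemma coordDist {d : ℕ} (a b : EuclideanSpace ℝ (Fin d)) (l : Fin d) :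
    dist (a l) (b l) ≤ dist a b := by
  rw [EuclideanSpace.dist_eq]
  have h1 : dist (a l) (b l) = Real.sqrt (dist (a l) (b l) ^ 2) := by
    rw [Real.sqrt_sq dist_nonneg]
  rw [h1]
  apply Real.sqrt_le_sqrt
  exact Finset.single_le_sum (f := fun i => dist (a i) (b i) ^ 2) (fun i _ => sq_nonneg _) (Finset.mem_univ l)

theorem statement14 (d : ℕ) (hd : 2 ≤ d) (n m : ℝ) (hn : 0 < n)
    (hm : 0 < m) (hmn : m ≤ n / 4) (j : Fin d → ℤ)
    (h : rho d (cube d n 0) (cube d m j) ≤ n / 2) :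
    nbhd d m j ⊆ nbhd d n 0 := by
  -- key bound on the center of K_j^m
  have key : ∀ l, |m * (j l : ℝ)| ≤ n + m / 2 := by
    intro l
    refine le_of_forall_pos_le_add ?_
    intro ε hε
    have hA : (WithLp.toLp 2 (fun _ => (0:ℝ)) : EuclideanSpace ℝ (Fin d)) ∈ cube d n 0 := by
      intro l; simp; positivity
    have hB : (WithLp.toLp 2 (fun l => m * (j l : ℝ)) : EuclideanSpace ℝ (Fin d)) ∈ cube d m j := by
      intro l; simp; positivity
    have hne : (Set.image2 dist (cube d n 0) (cube d m j)).Nonempty :=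
      ⟨_, Set.mem_image2_of_mem hA hB⟩
    have hbdd : BddBelow (Set.image2 dist (cube d n 0) (cube d m j)) := by
      refine ⟨0, ?_⟩
      rintro s ⟨a, _, b, _, rfl⟩
      exact dist_nonneg
    have hlt : rho d (cube d n 0) (cube d m j) < n / 2 + ε := lt_of_le_of_lt h (by linarith)
    obtain ⟨s, hs, hslt⟩ := exists_lt_of_csInf_lt hne hlt
    obtain ⟨a, ha, b, hb, rfl⟩ := hs
    have h1 : |a l| ≤ n / 2 := by simpa using ha l
    have h2 : |b l - m * (j l : ℝ)| ≤ m / 2 := hb l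
    have h3 : |a l - b l| ≤ dist a b := by
      have := coordDist a b l
      rwa [Real.dist_eq] at this
    have : |m * (j l : ℝ)| ≤ |a l| + |a l - b l| + |b l - m * (j l : ℝ)| := by
      have := abs_sub_abs_le_abs_sub (a l) (a l - b l)
      calc |m * (j l : ℝ)| = |(a l) - ((a l - b l) + (b l - m * (j l : ℝ)))| := by ring_nf
        _ ≤ |a l| + |(a l - b l) + (b l - m * (j l : ℝ))| := abs_sub _ _
        _ ≤ |a l| + (|a l - b l| + |b l - m * (j l : ℝ)|) := by
            gcongr; exact abs_add_le _ _
        _ = _ := by ring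
    linarith
  intro x hx
  simp only [nbhd, Set.mem_iUnion, Set.mem_setOf_eq, exists_prop] at hx ⊢
  obtain ⟨i, hi, hxi⟩ := hx
  -- bound on x coordinates
  have hxl : ∀ l, |x l| ≤ 3 * n / 2 := by
    intro l
    have h1 : |x l - m * (i l : ℝ)| ≤ m / 2 := hxi l
    have h2 : |((i - j) l : ℝ)| ≤ 1 := by
      have := norm_le_pi_norm (i - j) l
      have := this.trans hi
      simpa [Int.norm_eq_abs] using this
    have h2' : |m * (i l : ℝ) - m * (j l : ℝ)| ≤ m := by
      have : |m * (i l : ℝ) - m * (j l : ℝ)| = m * |((i l : ℝ) - (j l : ℝ))| := by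
        rw [← mul_sub, abs_mul, abs_of_pos hm]
      rw [this]
      have : |((i l : ℝ) - (j l : ℝ))| ≤ 1 := by
        simpa [Int.cast_sub] using h2
      nlinarith
    have h3 := key l
    have : |x l| ≤ |x l - m * (i l : ℝ)| + |m * (i l : ℝ) - m * (j l : ℝ)| + |m * (j l : ℝ)| := by
      calc |x l| = |(x l - m * (i l : ℝ)) + (m * (i l : ℝ) - m * (j l : ℝ)) + m * (j l : ℝ)| := by
            ring_nf
        _ ≤ _ := by
            refine (abs_add_le _ _).trans ?_
            gcongr
            exact abs_add_le _ _
    have hm4 : m ≤ n / 4 := hmn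
    linarith
  -- pick the right neighbouring cube of K_0^n
  refine ⟨fun l => if (n / 2 : ℝ) < x l then 1 else if x l < -(n / 2) then -1 else 0, ?_, ?_⟩
  · rw [pi_norm_le_iff_of_nonneg (by norm_num)]
    intro l
    simp only [Pi.sub_apply, Pi.zero_apply, sub_zero]
    split_ifs <;> simp [Int.norm_eq_abs]
  · intro l
    simp only
    have := hxl l
    rw [abs_le] at this
    split_ifs with h1 h2
    · rw [abs_le]; constructor <;> push_cast <;> linarith
    · rw [abs_le]; constructor <;> push_cast <;> linarith
    · rw [abs_le]; push_cast; constructor <;> linarith
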